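/- Let I, J be open intervals, φ: I → ℝ smooth with φ' ≠ 0 everywhere, ψ: I×J → ℝ smooth with ψ_y ≠ 0 everywhere, and A0, A1 smooth on I×J. If 4ψ_yy = ψ_y·A1 and 4φ'·ψ_xy = ψ_y·(6φ'' + φ'·A0) hold on I×J, then ∂A0/∂y = ∂A1/∂x on I×J. -/

import Mathlib

open Set Topology Filter

/-- Partial derivative with respect to the first variable. -/
noncomputable def px (f : ℝ → ℝ → ℝ) : ℝ → ℝ → ℝ := fun x y => deriv (fun s => f s y) x

/-- Partial derivative with respect to the second variable. -/
noncomputable def py (f : ℝ → ℝ → ℝ) : ℝ → ℝ → ℝ := fun x y => deriv (fun s => f x s) y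

/-- Smoothness of a function of two real variables on a set. -/
def Smooth2On (f : ℝ → ℝ → ℝ) (U : Set (ℝ × ℝ)) : Prop :=
  ContDiffOn ℝ (⊤ : ℕ∞) (fun p : ℝ × ℝ => f p.1 p.2) U

lemma aux_px_eq {f : ℝ → ℝ → ℝ} {x y : ℝ}
    (hd : DifferentiableAt ℝ (fun p : ℝ × ℝ => f p.1 p.2) (x, y)) :
    px f x y = fderiv ℝ (fun p : ℝ × ℝ => f p.1 p.2) (x, y) (1, 0) := by
  have h1 : HasDerivAt (fun s : ℝ => (s, y)) ((1 : ℝ), (0 : ℝ)) x :=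
    (hasDerivAt_id x).prodMk (hasDerivAt_const x y)
  have h2 := hd.hasFDerivAt.comp_hasDerivAt x h1
  simpa [px, Function.comp_def] using h2.deriv

lemma aux_py_eq {f : ℝ → ℝ → ℝ} {x y : ℝ}
    (hd : DifferentiableAt ℝ (fun p : ℝ × ℝ => f p.1 p.2) (x, y)) :
    py f x y = fderiv ℝ (fun p : ℝ × ℝ => f p.1 p.2) (x, y) (0, 1) := by
  have h1 : HasDerivAt (fun t : ℝ => (x, t)) ((0 : ℝ), (1 : ℝ)) y :=
    (hasDerivAt_const y x).prodMk (hasDerivAt_id y)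
  have h2 := hd.hasFDerivAt.comp_hasDerivAt y h1
  simpa [py, Function.comp_def] using h2.deriv

lemma aux_diffAt {f : ℝ → ℝ → ℝ} {U : Set (ℝ × ℝ)} (hf : Smooth2On f U) (hU : IsOpen U)
    {x y : ℝ} (hxy : (x, y) ∈ U) :
    DifferentiableAt ℝ (fun p : ℝ × ℝ => f p.1 p.2) (x, y) :=
  ((hf.contDiffAt (hU.mem_nhds hxy)).differentiableAt (by simp))

lemma aux_diff_fst {f : ℝ → ℝ → ℝ} {U : Set (ℝ × ℝ)} (hf : Smooth2On f U) (hU : IsOpen U)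
    {x y : ℝ} (hxy : (x, y) ∈ U) :
    DifferentiableAt ℝ (fun s => f s y) x := by
  have h := (aux_diffAt hf hU hxy).comp x
    ((differentiable_id.prodMk (differentiable_const y) : Differentiable ℝ (fun s : ℝ => (s, y))) x)
  exact h

lemma aux_diff_snd {f : ℝ → ℝ → ℝ} {U : Set (ℝ × ℝ)} (hf : Smooth2On f U) (hU : IsOpen U)
    {x y : ℝ} (hxy : (x, y) ∈ U) :
    DifferentiableAt ℝ (fun t => f x t) y := by
  have h := (aux_diffAt hf hU hxy).comp y
    (((differentiable_const x).prodMk differentiable_id) y)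
  exact h

lemma aux_smooth_clm {f : ℝ → ℝ → ℝ} {U : Set (ℝ × ℝ)} (hf : Smooth2On f U) (hU : IsOpen U)
    (v : ℝ × ℝ) :
    ContDiffOn ℝ (⊤ : ℕ∞) (fun p : ℝ × ℝ => fderiv ℝ (fun q : ℝ × ℝ => f q.1 q.2) p v) U := by
  have h := hf.fderiv_of_isOpen hU (m := (⊤ : ℕ∞)) (by exact_mod_cast le_rfl)
  exact h.clm_apply contDiffOn_const

lemma aux_smooth_px {f : ℝ → ℝ → ℝ} {U : Set (ℝ × ℝ)} (hf : Smooth2On f U) (hU : IsOpen U) :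
    Smooth2On (px f) U := by
  refine (aux_smooth_clm hf hU (1, 0)).congr ?_
  rintro ⟨x, y⟩ hp
  exact aux_px_eq (aux_diffAt hf hU hp)

lemma aux_smooth_py {f : ℝ → ℝ → ℝ} {U : Set (ℝ × ℝ)} (hf : Smooth2On f U) (hU : IsOpen U) :
    Smooth2On (py f) U := by
  refine (aux_smooth_clm hf hU (0, 1)).congr ?_
  rintro ⟨x, y⟩ hp
  exact aux_py_eq (aux_diffAt hf hU hp)

lemma aux_symm {f : ℝ → ℝ → ℝ} {U : Set (ℝ × ℝ)} (hf : Smooth2On f U) (hU : IsOpen U)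
    {x y : ℝ} (hxy : (x, y) ∈ U) :
    px (py f) x y = py (px f) x y := by
  set F : ℝ × ℝ → ℝ := fun p => f p.1 p.2 with hFdef
  set H : ℝ × ℝ → (ℝ × ℝ) →L[ℝ] ℝ := fderiv ℝ F with hHdef
  have hFat : ContDiffAt ℝ (⊤ : ℕ∞) F (x, y) := hf.contDiffAt (hU.mem_nhds hxy)
  have hsymm : IsSymmSndFDerivAt ℝ F (x, y) :=
    hFat.isSymmSndFDerivAt (by rw [minSmoothness_of_isRCLikeNormedField]; norm_cast)
  have hH : DifferentiableAt ℝ H (x, y) :=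
    (hFat.fderiv_right (m := 1) (by norm_cast)).differentiableAt one_ne_zero
  have ev1 : ∀ᶠ s in 𝓝 x, (s, y) ∈ U :=
    (continuous_id.prodMk continuous_const).continuousAt.preimage_mem_nhds (hU.mem_nhds hxy)
  have ev2 : ∀ᶠ t in 𝓝 y, (x, t) ∈ U :=
    (continuous_const.prodMk continuous_id).continuousAt.preimage_mem_nhds (hU.mem_nhds hxy)
  have eq1 : (fun s => py f s y) =ᶠ[𝓝 x] fun s => H (s, y) (0, 1) := by
    filter_upwards [ev1] with s hs
    exact aux_py_eq (aux_diffAt hf hU hs)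
  have eq2 : (fun t => px f x t) =ᶠ[𝓝 y] fun t => H (x, t) (1, 0) := by
    filter_upwards [ev2] with t ht
    exact aux_px_eq (aux_diffAt hf hU ht)
  have d1 : HasDerivAt (fun s => H (s, y) (0, 1)) (fderiv ℝ H (x, y) (1, 0) (0, 1)) x := by
    have hc : HasDerivAt (fun s => H (s, y)) (fderiv ℝ H (x, y) (1, 0)) x :=
      hH.hasFDerivAt.comp_hasDerivAt x ((hasDerivAt_id x).prodMk (hasDerivAt_const x y))
    simpa using hc.clm_apply (hasDerivAt_const x ((0 : ℝ), (1 : ℝ)))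
  have d2 : HasDerivAt (fun t => H (x, t) (1, 0)) (fderiv ℝ H (x, y) (0, 1) (1, 0)) y := by
    have hc : HasDerivAt (fun t => H (x, t)) (fderiv ℝ H (x, y) (0, 1)) y :=
      hH.hasFDerivAt.comp_hasDerivAt y ((hasDerivAt_const y x).prodMk (hasDerivAt_id y))
    simpa using hc.clm_apply (hasDerivAt_const y ((1 : ℝ), (0 : ℝ)))
  have E1 : px (py f) x y = fderiv ℝ H (x, y) (1, 0) (0, 1) := by
    simp only [px]
    rw [eq1.deriv_eq, d1.deriv]
  have E2 : py (px f) x y = fderiv ℝ H (x, y) (0, 1) (1, 0) := by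
    simp only [py]
    rw [eq2.deriv_eq, d2.deriv]
  rw [E1, E2]
  exact hsymm.eq _ _


/-- if `4ψ_yy = ψ_y·A1` and `4φ'·ψ_xy = ψ_y·(6φ'' + φ'·A0)` hold on `I × J`,
then `∂A0/∂y = ∂A1/∂x` on `I × J`. -/
theorem compatibility_A0y_eq_A1x
    (I J : Set ℝ) (hI : IsOpen I) (hIc : I.OrdConnected)
    (hJ : IsOpen J) (hJc : J.OrdConnected)
    (φ : ℝ → ℝ) (hφ : ContDiffOn ℝ (⊤ : ℕ∞) φ I)
    (hφx : ∀ x ∈ I, deriv φ x ≠ 0)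
    (ψ A0 A1 : ℝ → ℝ → ℝ)
    (hψ : Smooth2On ψ (I ×ˢ J))
    (hψy : ∀ x ∈ I, ∀ y ∈ J, py ψ x y ≠ 0)
    (hA0 : Smooth2On A0 (I ×ˢ J)) (hA1 : Smooth2On A1 (I ×ˢ J))
    (h1 : ∀ x ∈ I, ∀ y ∈ J, 4 * py (py ψ) x y = py ψ x y * A1 x y)
    (h2 : ∀ x ∈ I, ∀ y ∈ J,
      4 * deriv φ x * py (px ψ) x y
        = py ψ x y * (6 * iteratedDeriv 2 φ x + deriv φ x * A0 x y)) :
    ∀ x ∈ I, ∀ y ∈ J, py A0 x y = px A1 x y := by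
  intro x hx y hy
  set U : Set (ℝ × ℝ) := I ×ˢ J with hUdef
  have hU : IsOpen U := hI.prod hJ
  have hxy : (x, y) ∈ U := ⟨hx, hy⟩
  set a : ℝ := deriv φ x with hadef
  set b : ℝ := 6 * iteratedDeriv 2 φ x with hbdef
  have ha : a ≠ 0 := hφx x hx
  have hu : py ψ x y ≠ 0 := hψy x hx y hy
  -- smoothness of iterated partials
  have hψy_s : Smooth2On (py ψ) U := aux_smooth_py hψ hU
  have hψyy_s : Smooth2On (py (py ψ)) U := aux_smooth_py hψy_s hU
  have hψx_s : Smooth2On (px ψ) U := aux_smooth_px hψ hU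
  have hψxy_s : Smooth2On (py (px ψ)) U := aux_smooth_py hψx_s hU
  -- eventual membership
  have evI : ∀ᶠ s in 𝓝 x, (s, y) ∈ U :=
    (continuous_id.prodMk continuous_const).continuousAt.preimage_mem_nhds (hU.mem_nhds hxy)
  have evJ : ∀ᶠ t in 𝓝 y, (x, t) ∈ U :=
    (continuous_const.prodMk continuous_id).continuousAt.preimage_mem_nhds (hU.mem_nhds hxy)
  -- differentiate h1 in x
  have hd_yy : DifferentiableAt ℝ (fun s => py (py ψ) s y) x := aux_diff_fst hψyy_s hU hxy
  have hd_y : DifferentiableAt ℝ (fun s => py ψ s y) x := aux_diff_fst hψy_s hU hxy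
  have hd_A1 : DifferentiableAt ℝ (fun s => A1 s y) x := aux_diff_fst hA1 hU hxy
  have heq1 : (fun s => 4 * py (py ψ) s y) =ᶠ[𝓝 x] fun s => py ψ s y * A1 s y := by
    filter_upwards [evI] with s hs
    exact h1 s hs.1 y hs.2
  have E1 : 4 * px (py (py ψ)) x y
      = px (py ψ) x y * A1 x y + py ψ x y * px A1 x y := by
    have hL : deriv (fun s => 4 * py (py ψ) s y) x = 4 * px (py (py ψ)) x y := by
      rw [deriv_const_mul 4 hd_yy]; rfl
    have hR : deriv (fun s => py ψ s y * A1 s y) x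
        = px (py ψ) x y * A1 x y + py ψ x y * px A1 x y := by
      rw [deriv_fun_mul hd_y hd_A1]; rfl
    rw [← hL, heq1.deriv_eq, hR]
  -- differentiate h2 in y
  have hd_xy : DifferentiableAt ℝ (fun t => py (px ψ) x t) y := aux_diff_snd hψxy_s hU hxy
  have hd_y' : DifferentiableAt ℝ (fun t => py ψ x t) y := aux_diff_snd hψy_s hU hxy
  have hd_A0 : DifferentiableAt ℝ (fun t => A0 x t) y := aux_diff_snd hA0 hU hxy
  have heq2 : (fun t => 4 * a * py (px ψ) x t) =ᶠ[𝓝 y]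
      fun t => py ψ x t * (b + a * A0 x t) := by
    filter_upwards [evJ] with t ht
    exact h2 x ht.1 t ht.2
  have E2 : 4 * a * py (py (px ψ)) x y
      = py (py ψ) x y * (b + a * A0 x y) + py ψ x y * (a * py A0 x y) := by
    have hL : deriv (fun t => 4 * a * py (px ψ) x t) y = 4 * a * py (py (px ψ)) x y := by
      rw [deriv_const_mul (4 * a) hd_xy]; rfl
    have hinner : deriv (fun t => b + a * A0 x t) y = a * py A0 x y := by
      rw [deriv_const_add, deriv_const_mul a hd_A0]; rfl
    have hR : deriv (fun t => py ψ x t * (b + a * A0 x t)) y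
        = py (py ψ) x y * (b + a * A0 x y) + py ψ x y * (a * py A0 x y) := by
      rw [deriv_fun_mul hd_y' ((hd_A0.const_mul a).const_add b), hinner]; rfl
    rw [← hL, heq2.deriv_eq, hR]
  -- symmetry of mixed partials
  have S1 : px (py ψ) x y = py (px ψ) x y := aux_symm hψ hU hxy
  have S2 : px (py (py ψ)) x y = py (py (px ψ)) x y := by
    have s1 : px (py (py ψ)) x y = py (px (py ψ)) x y := aux_symm hψy_s hU hxy
    have ev : (fun t => px (py ψ) x t) =ᶠ[𝓝 y] fun t => py (px ψ) x t := by
      filter_upwards [evJ] with t ht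
      exact aux_symm hψ hU ht
    have s2 : py (px (py ψ)) x y = py (py (px ψ)) x y := by
      simp only [py]
      exact ev.deriv_eq
    rw [s1, s2]
  -- final algebra
  have H1 := h1 x hx y hy
  have H2 := h2 x hx y hy
  rw [← hadef, ← hbdef] at H2
  have key : a * py ψ x y ^ 2 * px A1 x y = a * py ψ x y ^ 2 * py A0 x y := by
    linear_combination (-(a * py ψ x y)) * E1 + py ψ x y * E2 + (4 * a * py ψ x y) * S2
      + (a * px (py ψ) x y) * H1 - py (py ψ) x y * H2 - (4 * a * py (py ψ) x y) * S1
  have hc : a * py ψ x y ^ 2 ≠ 0 := mul_ne_zero ha (pow_ne_zero 2 hu)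
  exact (mul_left_cancel₀ hc key).symm
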